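/- Assume P(Y⁰=0) > 0, consistency (P-almost surely, if D = 0 then Y = Y⁰), ignorability (for all a ∈ 𝒜, x ∈ 𝒳, and s, y, d ∈ {0,1} with P(A=a, X=x, S=s) > 0, P(Y⁰=y, D=d | A=a, X=x, S=s) = P(Y⁰=y | A=a, X=x, S=s) · P(D=d | A=a, X=x, S=s)), and positivity (P(D=0, A=a, X=x, S=s) > 0 whenever P(A=a, X=x, S=s) > 0). Then the overall counterfactual false positive rate is identified by the inverse-probability-weighted ratio: P(S=1 | Y⁰=0) = E[ 1{D=0} · 1{S=1} · 1{Y=0} / (1 − π(A,X,S)) ] / E[ 1{D=0} · 1{Y=0} / (1 − π(A,X,S)) ], where the denominator is strictly positive since it equals P(Y⁰=0). -/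

import Mathlib

open MeasureTheory

/-- `pr P E` is the probability of the event `E` as a real number. -/
noncomputable def pr {Ω : Type*} [MeasurableSpace Ω] (P : Measure Ω) (E : Set Ω) : ℝ :=
  (P E).toReal

/-- `cpr P E F = P(E | F) = P(E ∩ F) / P(F)`, the conditional probability of `E` given `F`. -/
noncomputable def cpr {Ω : Type*} [MeasurableSpace Ω] (P : Measure Ω) (E F : Set Ω) : ℝ :=
  pr P (E ∩ F) / pr P F


lemma pr_nonneg {Ω : Type*} [MeasurableSpace Ω] (P : Measure Ω) (E : Set Ω) : 0 ≤ pr P E :=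
  ENNReal.toReal_nonneg

lemma pr_union_disjoint {Ω : Type*} [MeasurableSpace Ω] (P : Measure Ω) [IsProbabilityMeasure P]
    {s t : Set Ω} (hd : Disjoint s t) (ht : MeasurableSet t) :
    pr P (s ∪ t) = pr P s + pr P t := by
  unfold pr
  rw [measure_union hd ht, ENNReal.toReal_add (measure_ne_top P s) (measure_ne_top P t)]

lemma pr_subset_zero {Ω : Type*} [MeasurableSpace Ω] (P : Measure Ω) [IsProbabilityMeasure P]
    {s t : Set Ω} (h : s ⊆ t) (ht : pr P t = 0) : pr P s = 0 := by
  unfold pr at *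
  have h0 : P t = 0 := by
    rcases (ENNReal.toReal_eq_zero_iff _).1 ht with h0 | h0
    · exact h0
    · exact absurd h0 (measure_ne_top P t)
  simp [measure_mono_null h h0]

lemma pr_partition {Ω γ : Type*} [MeasurableSpace Ω] [MeasurableSpace γ]
    [MeasurableSingletonClass γ] [Countable γ]
    (P : Measure Ω) [IsProbabilityMeasure P] (f : Ω → γ) (hf : Measurable f)
    (E : Set Ω) (hE : MeasurableSet E) :
    pr P E = ∑' c, pr P (E ∩ f ⁻¹' {c}) := by
  have hun : E = ⋃ c, E ∩ f ⁻¹' {c} := by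
    ext ω; simp
  have hdisj : Pairwise (Function.onFun Disjoint fun c => E ∩ f ⁻¹' {c}) := by
    intro c d hcd
    simp only [Function.onFun, Set.disjoint_left]
    rintro ω ⟨_, hc⟩ ⟨_, hdω⟩
    simp only [Set.mem_preimage, Set.mem_singleton_iff] at hc hdω
    exact hcd (hc ▸ hdω ▸ rfl)
  have hm := measure_iUnion (μ := P) hdisj (fun c => hE.inter (hf (measurableSet_singleton c)))
  unfold pr
  conv_lhs => rw [hun, hm]
  rw [ENNReal.tsum_toReal_eq (fun c => measure_ne_top P _)]

/-- under consistency, ignorability, and positivity, the overall counterfactual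
false positive rate is identified by the inverse-probability-weighted ratio:
`P(S=1 | Y⁰=0) = E[1{D=0}·1{S=1}·1{Y=0}/(1−π(A,X,S))] / E[1{D=0}·1{Y=0}/(1−π(A,X,S))]`,
where `π(a,x,s) = P(D=1 | A=a, X=x, S=s)`, the expectations are series over the level sets of
`(A, X, S)` (the indicator `1{S=1}` is encoded by also requiring `S ω = true` in the event), and
the denominator is strictly positive since it equals `P(Y⁰=0)`.
Binary variables are modelled as `Bool`-valued, with `1 = true` and `0 = false`. -/
theorem stmt_12
    {Ω 𝒜 𝒳 : Type*} [MeasurableSpace Ω]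
    [MeasurableSpace 𝒜] [MeasurableSingletonClass 𝒜] [Countable 𝒜] [Nonempty 𝒜]
    [MeasurableSpace 𝒳] [MeasurableSingletonClass 𝒳] [Countable 𝒳] [Nonempty 𝒳]
    (P : Measure Ω) [IsProbabilityMeasure P]
    (Y0 Y D S : Ω → Bool) (A : Ω → 𝒜) (X : Ω → 𝒳)
    (hY0 : Measurable Y0) (hY : Measurable Y) (hD : Measurable D) (hS : Measurable S)
    (hA : Measurable A) (hX : Measurable X)
    (hpos : 0 < pr P {ω | Y0 ω = false})
    (hcons : ∀ᵐ ω ∂P, D ω = false → Y ω = Y0 ω)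
    (hig : ∀ (a : 𝒜) (x : 𝒳) (s y d : Bool),
      0 < pr P {ω | A ω = a ∧ X ω = x ∧ S ω = s} →
      cpr P {ω | Y0 ω = y ∧ D ω = d} {ω | A ω = a ∧ X ω = x ∧ S ω = s} =
        cpr P {ω | Y0 ω = y} {ω | A ω = a ∧ X ω = x ∧ S ω = s} *
          cpr P {ω | D ω = d} {ω | A ω = a ∧ X ω = x ∧ S ω = s})
    (hposD : ∀ (a : 𝒜) (x : 𝒳) (s : Bool),
      0 < pr P {ω | A ω = a ∧ X ω = x ∧ S ω = s} →
      0 < pr P {ω | D ω = false ∧ A ω = a ∧ X ω = x ∧ S ω = s}) :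
    0 < (∑' (a : 𝒜) (x : 𝒳) (s : Bool),
          pr P {ω | D ω = false ∧ Y ω = false ∧ A ω = a ∧ X ω = x ∧ S ω = s} /
            (1 - cpr P {ω | D ω = true} {ω | A ω = a ∧ X ω = x ∧ S ω = s})) ∧
    (∑' (a : 𝒜) (x : 𝒳) (s : Bool),
        pr P {ω | D ω = false ∧ Y ω = false ∧ A ω = a ∧ X ω = x ∧ S ω = s} /
          (1 - cpr P {ω | D ω = true} {ω | A ω = a ∧ X ω = x ∧ S ω = s})) =
      pr P {ω | Y0 ω = false} ∧
    cpr P {ω | S ω = true} {ω | Y0 ω = false} =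
      (∑' (a : 𝒜) (x : 𝒳) (s : Bool),
          pr P {ω | D ω = false ∧ S ω = true ∧ Y ω = false ∧ A ω = a ∧ X ω = x ∧ S ω = s} /
            (1 - cpr P {ω | D ω = true} {ω | A ω = a ∧ X ω = x ∧ S ω = s})) /
        (∑' (a : 𝒜) (x : 𝒳) (s : Bool),
            pr P {ω | D ω = false ∧ Y ω = false ∧ A ω = a ∧ X ω = x ∧ S ω = s} /
              (1 - cpr P {ω | D ω = true} {ω | A ω = a ∧ X ω = x ∧ S ω = s})) := by
  classical
  -- splitting any event over the level sets of (A, X, S)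
  have hsplit : ∀ (E : Set Ω), MeasurableSet E →
      pr P E = ∑' (a : 𝒜), ∑' (x : 𝒳), ∑' (s : Bool),
        pr P (E ∩ {ω | A ω = a ∧ X ω = x ∧ S ω = s}) := by
    intro E hE
    rw [pr_partition P A hA E hE]
    refine tsum_congr fun a => ?_
    rw [pr_partition P X hX _ (hE.inter (hA (measurableSet_singleton a)))]
    refine tsum_congr fun x => ?_
    rw [pr_partition P S hS _ (((hE.inter (hA (measurableSet_singleton a)))).inter
      (hX (measurableSet_singleton x)))]
    refine tsum_congr fun s => ?_
    congr 1
    ext ω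
    simp only [Set.mem_inter_iff, Set.mem_preimage, Set.mem_singleton_iff, Set.mem_setOf_eq]
    tauto
  -- consistency at the level of the relevant events
  have hconsE : ∀ (a : 𝒜) (x : 𝒳) (s y : Bool),
      pr P {ω | D ω = false ∧ Y ω = y ∧ A ω = a ∧ X ω = x ∧ S ω = s} =
      pr P {ω | D ω = false ∧ Y0 ω = y ∧ A ω = a ∧ X ω = x ∧ S ω = s} := by
    intro a x s y
    unfold pr
    congr 1
    apply measure_congr
    rw [Filter.eventuallyEq_set]
    filter_upwards [hcons] with ω h
    constructor
    · rintro ⟨hd, hy, hr⟩; exact ⟨hd, by rw [← h hd]; exact hy, hr⟩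
    · rintro ⟨hd, hy, hr⟩; exact ⟨hd, by rw [h hd]; exact hy, hr⟩
  -- the per-cell IPW identity
  have key : ∀ (a : 𝒜) (x : 𝒳) (s y : Bool),
      pr P {ω | D ω = false ∧ Y0 ω = y ∧ A ω = a ∧ X ω = x ∧ S ω = s} /
        (1 - cpr P {ω | D ω = true} {ω | A ω = a ∧ X ω = x ∧ S ω = s}) =
      pr P ({ω | Y0 ω = y} ∩ {ω | A ω = a ∧ X ω = x ∧ S ω = s}) := by
    intro a x s y
    set C := {ω | A ω = a ∧ X ω = x ∧ S ω = s} with hC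
    have hCm : MeasurableSet C := by
      have hCeq : C = A ⁻¹' {a} ∩ (X ⁻¹' {x} ∩ S ⁻¹' {s}) := by
        ext ω; simp [hC]
      rw [hCeq]
      exact (hA (measurableSet_singleton a)).inter
        ((hX (measurableSet_singleton x)).inter (hS (measurableSet_singleton s)))
    by_cases hp : 0 < pr P C
    · have hpne : pr P C ≠ 0 := ne_of_gt hp
      have hq0 : 0 < pr P ({ω | D ω = false} ∩ C) := by
        have h := hposD a x s hp
        have hset : {ω | D ω = false ∧ A ω = a ∧ X ω = x ∧ S ω = s} =
            {ω | D ω = false} ∩ C := by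
          ext ω; simp only [Set.mem_setOf_eq, Set.mem_inter_iff, hC]
        rwa [hset] at h
      have hq0ne : pr P ({ω | D ω = false} ∩ C) ≠ 0 := ne_of_gt hq0
      have hsum : pr P ({ω | D ω = false} ∩ C) + pr P ({ω | D ω = true} ∩ C) = pr P C := by
        rw [← pr_union_disjoint P ?_ ?_]
        · congr 1
          ext ω
          simp only [Set.mem_union, Set.mem_inter_iff, Set.mem_setOf_eq]
          cases hDw : D ω <;> tauto
        · simp only [Set.disjoint_left, Set.mem_inter_iff, Set.mem_setOf_eq]
          rintro ω ⟨h1, -⟩ ⟨h2, -⟩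
          rw [h1] at h2; exact Bool.false_ne_true h2
        · exact (hD (measurableSet_singleton true)).inter hCm
      have hsetL : {ω | D ω = false ∧ Y0 ω = y ∧ A ω = a ∧ X ω = x ∧ S ω = s} =
          {ω | Y0 ω = y ∧ D ω = false} ∩ C := by
        ext ω; simp only [Set.mem_setOf_eq, Set.mem_inter_iff, hC]; tauto
      have hig' := hig a x s y false hp
      unfold cpr at hig' ⊢
      rw [hsetL]
      set B := pr P ({ω | Y0 ω = y} ∩ C) with hB
      set qF := pr P ({ω | D ω = false} ∩ C) with hqF
      set qT := pr P ({ω | D ω = true} ∩ C) with hqT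
      set p := pr P C with hp'
      have h1q : 1 - qT / p = qF / p := by
        field_simp
        linarith [hsum]
      rw [h1q]
      rw [← hC] at hig'
      have hX2 : pr P ({ω | Y0 ω = y ∧ D ω = false} ∩ C) = B * (qF / p) := by
        field_simp at hig'
        have h2 : pr P ({ω | Y0 ω = y ∧ D ω = false} ∩ C) * p = B * qF := by
          apply mul_right_cancel₀ hpne
          linear_combination p * hig'
        rw [← mul_div_assoc, eq_div_iff hpne]
        exact h2
      rw [hX2]
      exact mul_div_cancel_right₀ B (div_ne_zero hq0ne hpne)
    · have hp0 : pr P C = 0 := le_antisymm (not_lt.1 hp) (pr_nonneg P C)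
      have h1 : pr P {ω | D ω = false ∧ Y0 ω = y ∧ A ω = a ∧ X ω = x ∧ S ω = s} = 0 :=
        pr_subset_zero P (fun ω hω => hω.2.2) hp0
      have h2 : pr P ({ω | Y0 ω = y} ∩ C) = 0 :=
        pr_subset_zero P Set.inter_subset_right hp0
      have hcpr0 : cpr P {ω | D ω = true} C = 0 := by
        unfold cpr; rw [hp0]; simp
      rw [h1, h2, hcpr0]; norm_num
  have hmY0 : MeasurableSet {ω | Y0 ω = false} := hY0 (measurableSet_singleton false)
  have hden : (∑' (a : 𝒜) (x : 𝒳) (s : Bool),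
      pr P {ω | D ω = false ∧ Y ω = false ∧ A ω = a ∧ X ω = x ∧ S ω = s} /
        (1 - cpr P {ω | D ω = true} {ω | A ω = a ∧ X ω = x ∧ S ω = s})) =
      pr P {ω | Y0 ω = false} := by
    rw [hsplit {ω | Y0 ω = false} hmY0]
    exact tsum_congr fun a => tsum_congr fun x => tsum_congr fun s => by
      rw [hconsE a x s false, key a x s false]
  have hE : MeasurableSet ({ω | S ω = true} ∩ {ω | Y0 ω = false}) :=
    (hS (measurableSet_singleton true)).inter hmY0
  have hnum : (∑' (a : 𝒜) (x : 𝒳) (s : Bool),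
      pr P {ω | D ω = false ∧ S ω = true ∧ Y ω = false ∧ A ω = a ∧ X ω = x ∧ S ω = s} /
        (1 - cpr P {ω | D ω = true} {ω | A ω = a ∧ X ω = x ∧ S ω = s})) =
      pr P ({ω | S ω = true} ∩ {ω | Y0 ω = false}) := by
    rw [hsplit _ hE]
    refine tsum_congr fun a => tsum_congr fun x => ?_
    rw [tsum_bool, tsum_bool]
    have hfalse1 : {ω | D ω = false ∧ S ω = true ∧ Y ω = false ∧ A ω = a ∧ X ω = x ∧
        S ω = false} = (∅ : Set Ω) := by
      ext ω
      simp only [Set.mem_setOf_eq, Set.mem_empty_iff_false, iff_false, not_and]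
      intro _ h1 _ _ _ h2
      rw [h1] at h2
      simp at h2
    have hfalse2 : ({ω | S ω = true} ∩ {ω | Y0 ω = false}) ∩
        {ω | A ω = a ∧ X ω = x ∧ S ω = false} = (∅ : Set Ω) := by
      ext ω
      simp only [Set.mem_inter_iff, Set.mem_setOf_eq, Set.mem_empty_iff_false, iff_false]
      rintro ⟨⟨h1, -⟩, -, -, h2⟩
      rw [h1] at h2
      simp at h2
    have htrue1 : {ω | D ω = false ∧ S ω = true ∧ Y ω = false ∧ A ω = a ∧ X ω = x ∧
        S ω = true} = {ω | D ω = false ∧ Y ω = false ∧ A ω = a ∧ X ω = x ∧ S ω = true} := by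
      ext ω; simp only [Set.mem_setOf_eq]; tauto
    have htrue2 : ({ω | S ω = true} ∩ {ω | Y0 ω = false}) ∩
        {ω | A ω = a ∧ X ω = x ∧ S ω = true} =
        {ω | Y0 ω = false} ∩ {ω | A ω = a ∧ X ω = x ∧ S ω = true} := by
      ext ω; simp only [Set.mem_inter_iff, Set.mem_setOf_eq]; tauto
    rw [hfalse1, hfalse2, htrue1, htrue2, hconsE a x true false, key a x true false]
    simp [pr]
  refine ⟨by rw [hden]; exact hpos, hden, ?_⟩
  rw [hnum, hden]
  rfl
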